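/- Lower bound construction for list-decodable mean estimation under bounded covariance (Proposition, part (ii)): For every positive integer n and every α ∈ (0, 1/2], there exist probability measures X, D₁, …, D_n, Y₁, …, Y_n on ℝⁿ such that: (1) X = α·D_i + (1 − α)·Y_i for every i ∈ [n]; (2) each D_i has mean vector (2α)^{−1/2}·e_i and covariance matrix ⪯ I. Consequently, for every finite set L ⊆ ℝⁿ with |L| < n, there exists i ∈ [n] such that every f ∈ L satisfies ‖f − (2α)^{−1/2}·e_i‖₂ ≥ (1/2)·α^{−1/2}. -/

import Mathlib

open MeasureTheory Finset

namespace Stmt15Aux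
variable {n : ℕ}

noncomputable def pt (s : ℝ) (c : Fin 3 → ℝ) (σ : Fin n → Fin 3) : EuclideanSpace ℝ (Fin n) :=
  WithLp.toLp 2 (fun j => s * c (σ j))

noncomputable def M (s : ℝ) (c : Fin 3 → ℝ) (F : Fin n → Fin 3 → ℝ) :
    Measure (EuclideanSpace ℝ (Fin n)) :=
  ∑ σ : Fin n → Fin 3, ENNReal.ofReal (∏ j, F j (σ j)) • Measure.dirac (pt s c σ)

lemma sum_prod (F : Fin n → Fin 3 → ℝ) :
    ∑ σ : Fin n → Fin 3, ∏ j, F j (σ j) = ∏ j, ∑ m, F j m := by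
  rw [Finset.prod_univ_sum]
  simp [Fintype.piFinset_univ]

lemma prod_absorb (F : Fin n → Fin 3 → ℝ) (k : Fin n) (g : Fin 3 → ℝ) (σ : Fin n → Fin 3) :
    (∏ j, F j (σ j)) * g (σ k) =
      ∏ j, Function.update F k (fun m => F k m * g m) j (σ j) := by
  rw [← Finset.mul_prod_erase univ (fun j => F j (σ j)) (mem_univ k),
      ← Finset.mul_prod_erase univ (fun j => Function.update F k (fun m => F k m * g m) j (σ j))
        (mem_univ k)]
  rw [Function.update_self]
  have h : ∏ j ∈ univ.erase k, Function.update F k (fun m => F k m * g m) j (σ j)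
      = ∏ j ∈ univ.erase k, F j (σ j) :=
    Finset.prod_congr rfl fun j hj => by
      rw [Function.update_of_ne (Finset.ne_of_mem_erase hj)]
  rw [h]; ring

lemma sum_prod_mul (F : Fin n → Fin 3 → ℝ) (k : Fin n) (g : Fin 3 → ℝ) :
    ∑ σ : Fin n → Fin 3, (∏ j, F j (σ j)) * g (σ k)
      = (∑ m, F k m * g m) * ∏ j ∈ univ.erase k, ∑ m, F j m := by
  simp_rw [prod_absorb F k g]
  rw [sum_prod, ← Finset.mul_prod_erase univ _ (mem_univ k), Function.update_self]
  congr 1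
  refine Finset.prod_congr rfl (fun j hj => ?_)
  rw [Function.update_of_ne (Finset.ne_of_mem_erase hj)]


lemma M_univ (s : ℝ) (c : Fin 3 → ℝ) (F : Fin n → Fin 3 → ℝ) (hF : ∀ j m, 0 ≤ F j m) :
    (M s c F) Set.univ = ENNReal.ofReal (∏ j, ∑ m, F j m) := by
  rw [M]
  rw [Measure.coe_finset_sum]
  rw [Finset.sum_apply]
  have : ∀ σ : Fin n → Fin 3,
      (ENNReal.ofReal (∏ j, F j (σ j)) • Measure.dirac (pt s c σ)) Set.univ
        = ENNReal.ofReal (∏ j, F j (σ j)) := by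
    intro σ
    simp [Measure.smul_apply]
  rw [Finset.sum_congr rfl (fun σ _ => this σ)]
  rw [← ENNReal.ofReal_sum_of_nonneg (fun σ _ => Finset.prod_nonneg (fun j _ => hF j (σ j)))]
  rw [sum_prod]

lemma isProb_M (s : ℝ) (c : Fin 3 → ℝ) (F : Fin n → Fin 3 → ℝ) (hF : ∀ j m, 0 ≤ F j m)
    (hF1 : ∀ j, ∑ m, F j m = 1) : IsProbabilityMeasure (M s c F) := by
  constructor
  rw [M_univ s c F hF]
  simp [hF1]

lemma integrable_M {V : Type*} [NormedAddCommGroup V] (s : ℝ) (c : Fin 3 → ℝ)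
    (F : Fin n → Fin 3 → ℝ) (f : EuclideanSpace ℝ (Fin n) → V)
    (hf : MeasureTheory.StronglyMeasurable f) : Integrable f (M s c F) := by
  rw [M]
  refine integrable_finset_sum_measure.2 (fun σ _ => ?_)
  refine Integrable.smul_measure ?_ ENNReal.ofReal_ne_top
  refine ⟨hf.aestronglyMeasurable, ?_⟩
  rw [HasFiniteIntegral, lintegral_dirac]
  exact ENNReal.coe_lt_top

lemma integral_M {V : Type*} [NormedAddCommGroup V] [NormedSpace ℝ V] [CompleteSpace V] (s : ℝ) (c : Fin 3 → ℝ)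
    (F : Fin n → Fin 3 → ℝ) (hF : ∀ j m, 0 ≤ F j m) (f : EuclideanSpace ℝ (Fin n) → V)
    (hf : MeasureTheory.StronglyMeasurable f) :
    ∫ x, f x ∂(M s c F) = ∑ σ : Fin n → Fin 3, (∏ j, F j (σ j)) • f (pt s c σ) := by
  rw [M, integral_finset_sum_measure (fun σ _ => by
    refine Integrable.smul_measure ?_ ENNReal.ofReal_ne_top
    refine ⟨hf.aestronglyMeasurable, ?_⟩
    rw [HasFiniteIntegral, lintegral_dirac]
    exact ENNReal.coe_lt_top)]
  refine Finset.sum_congr rfl (fun σ _ => ?_)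
  rw [integral_smul_measure, integral_dirac,
    ENNReal.toReal_ofReal (Finset.prod_nonneg (fun j _ => hF j (σ j)))]


noncomputable def cc : Fin 3 → ℝ := ![0, 1, -1]
noncomputable def wB (α : ℝ) : Fin 3 → ℝ := ![1 - 2*α, α, α]
noncomputable def wD0 : Fin 3 → ℝ := ![0, 1, 0]
noncomputable def wY (α : ℝ) : Fin 3 → ℝ := ![(1 - 2*α)/(1 - α), 0, α/(1 - α)]
noncomputable def sA (α : ℝ) : ℝ := (2*α) ^ (-(1:ℝ)/2)

noncomputable def XX (n : ℕ) (α : ℝ) : Measure (EuclideanSpace ℝ (Fin n)) :=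
  M (sA α) cc (fun _ => wB α)
noncomputable def DD (n : ℕ) (α : ℝ) (i : Fin n) : Measure (EuclideanSpace ℝ (Fin n)) :=
  M (sA α) cc (Function.update (fun _ => wB α) i wD0)
noncomputable def YY (n : ℕ) (α : ℝ) (i : Fin n) : Measure (EuclideanSpace ℝ (Fin n)) :=
  M (sA α) cc (Function.update (fun _ => wB α) i (wY α))

section scalar
variable {α : ℝ}

lemma sum_wB : ∑ m, wB α m = 1 := by
  simp [wB, Fin.sum_univ_three]; ring
lemma sum_wB_cc : ∑ m, wB α m * cc m = 0 := by
  simp [wB, cc, Fin.sum_univ_three]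
lemma sum_wB_cc2 : ∑ m, wB α m * cc m ^ 2 = 2*α := by
  simp [wB, cc, Fin.sum_univ_three]; ring
lemma sum_wD0 : ∑ m, wD0 m = 1 := by
  simp [wD0, Fin.sum_univ_three]
lemma sum_wD0_cc : ∑ m, wD0 m * cc m = 1 := by
  simp [wD0, cc, Fin.sum_univ_three]
lemma sum_wY (hα : α ≤ 1/2) : ∑ m, wY α m = 1 := by
  have h1 : (1:ℝ) - α ≠ 0 := by linarith [hα]
  simp [wY, Fin.sum_univ_three]
  field_simp
  ring
lemma wB_nonneg (hα0 : 0 < α) (hα : α ≤ 1/2) : ∀ m, 0 ≤ wB α m := by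
  intro m; fin_cases m <;> simp [wB] <;> linarith
lemma wD0_nonneg : ∀ m, 0 ≤ wD0 m := by
  intro m; fin_cases m <;> simp [wD0]
lemma wY_nonneg (hα0 : 0 < α) (hα : α ≤ 1/2) : ∀ m, 0 ≤ wY α m := by
  have h1 : (0:ℝ) < 1 - α := by linarith
  have h2 : (0:ℝ) ≤ 1 - 2*α := by linarith
  intro m; fin_cases m <;> simp [wY] <;> positivity
lemma wB_decomp (hα : α ≤ 1/2) : ∀ m, wB α m = α * wD0 m + (1 - α) * wY α m := by
  have h1 : (1:ℝ) - α ≠ 0 := by linarith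
  intro m; fin_cases m <;> simp [wB, wD0, wY] <;> field_simp <;> ring
lemma sA_pos (hα0 : 0 < α) : 0 < sA α := Real.rpow_pos_of_pos (by linarith) _
lemma sA_sq (hα0 : 0 < α) : sA α ^ 2 = (2*α)⁻¹ := by
  have h2 : (0:ℝ) ≤ 2*α := by linarith
  rw [sA, ← Real.rpow_natCast ((2*α) ^ (-(1:ℝ)/2)) 2, ← Real.rpow_mul h2]
  have he : (-(1:ℝ)/2) * ((2:ℕ):ℝ) = -1 := by norm_num
  rw [he, Real.rpow_neg_one]

end scalar

section measures
variable {n : ℕ} {α : ℝ}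

lemma FD_nonneg (hα0 : 0 < α) (hα : α ≤ 1/2) (i j : Fin n) :
    ∀ m, 0 ≤ Function.update (fun _ => wB α) i wD0 j m := by
  rcases eq_or_ne j i with h | h
  · subst h; rw [Function.update_self]; exact wD0_nonneg
  · rw [Function.update_of_ne h]; exact wB_nonneg hα0 hα

lemma FD_sum (i j : Fin n) : ∑ m, Function.update (fun _ => wB α) i wD0 j m = 1 := by
  rcases eq_or_ne j i with h | h
  · subst h; rw [Function.update_self]; exact sum_wD0
  · rw [Function.update_of_ne h]; exact sum_wB

lemma FY_nonneg (hα0 : 0 < α) (hα : α ≤ 1/2) (i j : Fin n) :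
    ∀ m, 0 ≤ Function.update (fun _ => wB α) i (wY α) j m := by
  rcases eq_or_ne j i with h | h
  · subst h; rw [Function.update_self]; exact wY_nonneg hα0 hα
  · rw [Function.update_of_ne h]; exact wB_nonneg hα0 hα

lemma FY_sum (hα : α ≤ 1/2) (i j : Fin n) :
    ∑ m, Function.update (fun _ => wB α) i (wY α) j m = 1 := by
  rcases eq_or_ne j i with h | h
  · subst h; rw [Function.update_self]; exact sum_wY hα
  · rw [Function.update_of_ne h]; exact sum_wB

lemma probXX (hα0 : 0 < α) (hα : α ≤ 1/2) : IsProbabilityMeasure (XX n α) :=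
  isProb_M _ _ _ (fun _ => wB_nonneg hα0 hα) (fun _ => sum_wB)

lemma probDD (hα0 : 0 < α) (hα : α ≤ 1/2) (i : Fin n) : IsProbabilityMeasure (DD n α i) :=
  isProb_M _ _ _ (FD_nonneg hα0 hα i) (FD_sum i)

lemma probYY (hα0 : 0 < α) (hα : α ≤ 1/2) (i : Fin n) : IsProbabilityMeasure (YY n α i) :=
  isProb_M _ _ _ (FY_nonneg hα0 hα i) (FY_sum hα i)

lemma prod_update_eq (G : Fin 3 → ℝ) (i : Fin n) (σ : Fin n → Fin 3) :
    ∏ j, Function.update (fun _ => wB α) i G j (σ j)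
      = G (σ i) * ∏ j ∈ univ.erase i, wB α (σ j) := by
  rw [← Finset.mul_prod_erase univ _ (mem_univ i), Function.update_self]
  congr 1
  exact Finset.prod_congr rfl fun j hj => by
    rw [Function.update_of_ne (Finset.ne_of_mem_erase hj)]

lemma mixXX (hα0 : 0 < α) (hα : α ≤ 1/2) (i : Fin n) :
    XX n α = ENNReal.ofReal α • DD n α i + ENNReal.ofReal (1 - α) • YY n α i := by
  rw [XX, DD, YY, M, M, M, Finset.smul_sum, Finset.smul_sum, ← Finset.sum_add_distrib]
  refine Finset.sum_congr rfl (fun σ _ => ?_)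
  rw [smul_smul, smul_smul, ← add_smul]
  congr 1
  have hP : 0 ≤ ∏ j ∈ univ.erase i, wB α (σ j) :=
    Finset.prod_nonneg fun j _ => wB_nonneg hα0 hα (σ j)
  have hB : ∏ j, wB α (σ j) = wB α (σ i) * ∏ j ∈ univ.erase i, wB α (σ j) :=
    (Finset.mul_prod_erase univ _ (mem_univ i)).symm
  have hcoe : ENNReal.ofReal (wB α (σ i) * ∏ j ∈ univ.erase i, wB α (σ j))
      = ENNReal.ofReal α * ENNReal.ofReal (wD0 (σ i) * ∏ j ∈ univ.erase i, wB α (σ j))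
        + ENNReal.ofReal (1 - α)
          * ENNReal.ofReal (wY α (σ i) * ∏ j ∈ univ.erase i, wB α (σ j)) := by
    rw [← ENNReal.ofReal_mul hα0.le,
      ← ENNReal.ofReal_mul (show (0:ℝ) ≤ 1 - α by linarith),
      ← ENNReal.ofReal_add
        (mul_nonneg hα0.le (mul_nonneg (wD0_nonneg (σ i)) hP))
        (mul_nonneg (by linarith) (mul_nonneg (wY_nonneg hα0 hα (σ i)) hP))]
    congr 1
    rw [wB_decomp hα (σ i)]; ring
  rw [hB, prod_update_eq wD0 i σ, prod_update_eq (wY α) i σ, hcoe]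

lemma integrableDD (hα0 : 0 < α) (hα : α ≤ 1/2) (i : Fin n) :
    Integrable (fun x => x) (DD n α i) :=
  integrable_M _ _ _ _ (stronglyMeasurable_id :
    StronglyMeasurable (fun x : EuclideanSpace ℝ (Fin n) => x))

lemma meanDD (hα0 : 0 < α) (hα : α ≤ 1/2) (i : Fin n) :
    (∫ x, x ∂(DD n α i)) = sA α • EuclideanSpace.single i 1 := by
  rw [DD, integral_M _ _ _ (FD_nonneg hα0 hα i) (fun x => x) (stronglyMeasurable_id :
    StronglyMeasurable (fun x : EuclideanSpace ℝ (Fin n) => x))]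
  ext k
  rw [WithLp.ofLp_sum, Finset.sum_apply k univ _]
  have h1 : ∀ σ : Fin n → Fin 3,
      ((∏ j, Function.update (fun _ => wB α) i wD0 j (σ j)) • pt (sA α) cc σ) k
        = (∏ j, Function.update (fun _ => wB α) i wD0 j (σ j)) * (sA α * cc (σ k)) := by
    intro σ; rfl
  rw [Finset.sum_congr rfl fun σ _ => h1 σ]
  have h2 : ∀ σ : Fin n → Fin 3,
      (∏ j, Function.update (fun _ => wB α) i wD0 j (σ j)) * (sA α * cc (σ k))
        = sA α * ((∏ j, Function.update (fun _ => wB α) i wD0 j (σ j)) * cc (σ k)) := by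
    intro σ; ring
  rw [Finset.sum_congr rfl fun σ _ => h2 σ, ← Finset.mul_sum,
    sum_prod_mul (Function.update (fun _ => wB α) i wD0) k cc]
  have h3 : ∏ j ∈ univ.erase k, (∑ m, Function.update (fun _ => wB α) i wD0 j m) = 1 :=
    Finset.prod_eq_one fun j _ => FD_sum i j
  rw [h3]
  have h4 : (sA α • EuclideanSpace.single i (1:ℝ)) k = sA α * (if k = i then 1 else 0) := by
    have : (sA α • EuclideanSpace.single i (1:ℝ)) k
        = sA α * EuclideanSpace.single i (1:ℝ) k := rfl
    rw [this, EuclideanSpace.single_apply]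
  rw [h4]
  rcases eq_or_ne k i with h | h
  · subst h
    rw [Function.update_self, sum_wD0_cc, if_pos rfl]
    ring
  · rw [Function.update_of_ne h, sum_wB_cc, if_neg h]
    ring


lemma covDD (hα0 : 0 < α) (hα : α ≤ 1/2) (i : Fin n) (v : EuclideanSpace ℝ (Fin n)) :
    (∫ x, (inner ℝ v (x - sA α • EuclideanSpace.single i 1) : ℝ) ^ 2 ∂(DD n α i)) ≤ ‖v‖ ^ 2 := by
  classical
  set F := Function.update (fun _ : Fin n => wB α) i wD0 with hF
  set μ : EuclideanSpace ℝ (Fin n) := sA α • EuclideanSpace.single i 1 with hμ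
  have hmeas : StronglyMeasurable fun x : EuclideanSpace ℝ (Fin n) =>
      (inner ℝ v (x - μ) : ℝ) ^ 2 := by
    have hc : Continuous fun x : EuclideanSpace ℝ (Fin n) => (inner ℝ v (x - μ) : ℝ) :=
      Continuous.inner continuous_const (continuous_id.sub continuous_const)
    exact (hc.pow 2).stronglyMeasurable
  rw [DD, integral_M _ _ _ (FD_nonneg hα0 hα i) _ hmeas]
  set A : Fin n → Fin 3 → ℝ :=
    fun k m => v k * (sA α * cc m - (if k = i then sA α else 0)) with hA
  have hval : ∀ σ : Fin n → Fin 3,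
      (inner ℝ v (pt (sA α) cc σ - μ) : ℝ) = ∑ k, A k (σ k) := by
    intro σ
    rw [PiLp.inner_apply]
    refine Finset.sum_congr rfl fun k _ => ?_
    have h1 : (pt (sA α) cc σ - μ) k = sA α * cc (σ k) - sA α * (if k = i then 1 else 0) := by
      have : (pt (sA α) cc σ - μ) k = pt (sA α) cc σ k - μ k := rfl
      rw [this]
      have hμk : μ k = sA α * (if k = i then 1 else 0) := by
        have : μ k = sA α * EuclideanSpace.single i (1:ℝ) k := rfl
        rw [this, EuclideanSpace.single_apply]
      rw [hμk]; rfl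
    simp only [RCLike.inner_apply, conj_trivial, h1, hA]
    by_cases hk : k = i <;> simp [hk] <;> ring
  have key1 : ∀ k, ∑ m, F k m * A k m = 0 := by
    intro k
    rcases eq_or_ne k i with h | h
    · subst h
      rw [hF, Function.update_self]
      simp [hA, wD0, cc, Fin.sum_univ_three]
    · rw [hF, Function.update_of_ne h]
      simp only [hA, if_neg h]
      simp only [wB, cc, Fin.sum_univ_three, Matrix.cons_val_zero, Matrix.cons_val_one,
        Matrix.head_cons, Matrix.cons_val_two, Matrix.tail_cons]
      ring
  have hrest : ∀ k : Fin n, ∏ j ∈ univ.erase k, (∑ m, F j m) = 1 :=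
    fun k => Finset.prod_eq_one fun j _ => FD_sum i j
  have cross : ∀ k l : Fin n, k ≠ l →
      ∑ σ : Fin n → Fin 3, (∏ j, F j (σ j)) * (A k (σ k) * A l (σ l)) = 0 := by
    intro k l hkl
    have habs : ∀ σ : Fin n → Fin 3,
        (∏ j, F j (σ j)) * (A k (σ k) * A l (σ l))
          = (∏ j, Function.update F l (fun m => F l m * A l m) j (σ j)) * A k (σ k) := by
      intro σ
      rw [← prod_absorb F l (A l) σ]
      ring
    rw [Finset.sum_congr rfl fun σ _ => habs σ,
      sum_prod_mul (Function.update F l fun m => F l m * A l m) k (A k)]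
    rw [Function.update_of_ne hkl, key1 k, zero_mul]
  have diag : ∀ k : Fin n,
      ∑ σ : Fin n → Fin 3, (∏ j, F j (σ j)) * (A k (σ k) * A k (σ k))
        = if k = i then 0 else v k ^ 2 := by
    intro k
    rw [sum_prod_mul F k (fun m => A k m * A k m), hrest k, mul_one]
    rcases eq_or_ne k i with h | h
    · subst h
      rw [if_pos rfl, hF, Function.update_self]
      simp [hA, wD0, cc, Fin.sum_univ_three]
    · rw [if_neg h, hF, Function.update_of_ne h]
      simp only [hA, if_neg h]
      have h2α : (2*α) ≠ 0 := by positivity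
      have := sA_sq (α := α) hα0
      simp [wB, cc, Fin.sum_univ_three, sub_zero]
      ring_nf
      rw [this]
      field_simp
  have hexp : ∀ σ : Fin n → Fin 3,
      (∏ j, F j (σ j)) • (inner ℝ v (pt (sA α) cc σ - μ) : ℝ) ^ 2
        = ∑ k, ∑ l, (∏ j, F j (σ j)) * (A k (σ k) * A l (σ l)) := by
    intro σ
    rw [hval σ, smul_eq_mul, sq, Finset.sum_mul_sum, Finset.mul_sum]
    refine Finset.sum_congr rfl fun k _ => ?_
    rw [Finset.mul_sum]
  rw [Finset.sum_congr rfl fun σ _ => hexp σ, Finset.sum_comm]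
  have hsum : ∀ k : Fin n,
      ∑ σ : Fin n → Fin 3, ∑ l, (∏ j, F j (σ j)) * (A k (σ k) * A l (σ l))
        = if k = i then 0 else v k ^ 2 := by
    intro k
    rw [Finset.sum_comm]
    rw [Finset.sum_eq_single k (fun l _ hlk => cross k l (Ne.symm hlk)) (by simp)]
    exact diag k
  rw [Finset.sum_congr rfl fun k _ => hsum k]
  have hnv : ‖v‖ ^ 2 = ∑ k, v k ^ 2 := by
    rw [← real_inner_self_eq_norm_sq, PiLp.inner_apply]
    simp [RCLike.inner_apply, sq]
  rw [hnv]
  refine Finset.sum_le_sum fun k _ => ?_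
  split
  · positivity
  · exact le_refl _
  
end measures

lemma rpow_neg_half_sq {x : ℝ} (hx : 0 < x) : (x ^ (-(1:ℝ)/2)) ^ 2 = x⁻¹ := by
  rw [← Real.rpow_natCast (x ^ (-(1:ℝ)/2)) 2, ← Real.rpow_mul hx.le]
  have he : (-(1:ℝ)/2) * ((2:ℕ):ℝ) = -1 := by norm_num
  rw [he, Real.rpow_neg_one]

lemma dist_means {n : ℕ} {α : ℝ} (hα0 : 0 < α) {i j : Fin n} (hij : i ≠ j) :
    ‖(sA α • EuclideanSpace.single i 1 : EuclideanSpace ℝ (Fin n))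
      - sA α • EuclideanSpace.single j 1‖ = α ^ (-(1:ℝ)/2) := by
  classical
  set u : EuclideanSpace ℝ (Fin n) := sA α • EuclideanSpace.single i 1 with hu
  set z : EuclideanSpace ℝ (Fin n) := sA α • EuclideanSpace.single j 1 with hz
  have hr0 : (0:ℝ) ≤ α ^ (-(1:ℝ)/2) := (Real.rpow_pos_of_pos hα0 _).le
  have hsq : ‖u - z‖ ^ 2 = (α ^ (-(1:ℝ)/2)) ^ 2 := by
    rw [← real_inner_self_eq_norm_sq, PiLp.inner_apply]
    have hd : ∀ k : Fin n, (u - z) k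
        = sA α * (if k = i then 1 else 0) - sA α * (if k = j then 1 else 0) := by
      intro k
      have h1 : (u - z) k = u k - z k := rfl
      have h2 : u k = sA α * EuclideanSpace.single i (1:ℝ) k := rfl
      have h3 : z k = sA α * EuclideanSpace.single j (1:ℝ) k := rfl
      rw [h1, h2, h3, EuclideanSpace.single_apply, EuclideanSpace.single_apply]
    have hterm : ∀ k : Fin n, (inner ℝ ((u - z) k) ((u - z) k) : ℝ)
        = (if k = i then sA α ^ 2 else 0) + (if k = j then sA α ^ 2 else 0) := by
      intro k
      rw [RCLike.inner_apply, starRingEnd_apply, star_trivial, hd k]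
      by_cases hki : k = i <;> by_cases hkj : k = j
      · exact absurd (hki ▸ hkj ▸ rfl : i = j) hij
      · simp [hki, hkj, hij, Ne.symm hij]; ring
      · simp [hki, hkj, hij, Ne.symm hij]; ring
      · simp [hki, hkj]
    rw [Finset.sum_congr rfl fun k _ => hterm k, Finset.sum_add_distrib,
      Finset.sum_ite_eq' univ i (fun _ => sA α ^ 2),
      Finset.sum_ite_eq' univ j (fun _ => sA α ^ 2)]
    simp only [mem_univ, if_pos]
    rw [sA_sq hα0, rpow_neg_half_sq hα0]
    have h2α : (2*α) ≠ 0 := by positivity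
    field_simp
    norm_num
  have hn : (0:ℝ) ≤ ‖u - z‖ := norm_nonneg _
  calc ‖u - z‖ = Real.sqrt (‖u - z‖ ^ 2) := (Real.sqrt_sq hn).symm
    _ = Real.sqrt ((α ^ (-(1:ℝ)/2)) ^ 2) := by rw [hsq]
    _ = α ^ (-(1:ℝ)/2) := Real.sqrt_sq hr0

end Stmt15Aux

open Stmt15Aux in
/-- Lower bound construction for list-decodable mean estimation under bounded covariance:
there are probability measures `X, D i, Y i` on `ℝⁿ` with `X = α D i + (1-α) Y i` for all `i`,
where `D i` has mean `(2α)^{-1/2} eᵢ` and covariance `⪯ I`; consequently any list of fewer than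
`n` hypotheses misses some mean by at least `(1/2) α^{-1/2}`. -/
theorem stmt_15 (n : ℕ) (hn : 0 < n) (α : ℝ) (hα0 : 0 < α) (hα : α ≤ 1 / 2) :
    (∃ (X : Measure (EuclideanSpace ℝ (Fin n)))
       (D Y : Fin n → Measure (EuclideanSpace ℝ (Fin n))),
      IsProbabilityMeasure X ∧ (∀ i, IsProbabilityMeasure (D i)) ∧
      (∀ i, IsProbabilityMeasure (Y i)) ∧
      (∀ i, X = ENNReal.ofReal α • D i + ENNReal.ofReal (1 - α) • Y i) ∧
      (∀ i, Integrable (fun x => x) (D i)) ∧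
      (∀ i, (∫ x, x ∂(D i)) = ((2 * α) ^ (-(1 : ℝ) / 2)) • EuclideanSpace.single i 1) ∧
      (∀ i, ∀ v : EuclideanSpace ℝ (Fin n),
        (∫ x, (inner ℝ v (x - ((2 * α) ^ (-(1 : ℝ) / 2)) • EuclideanSpace.single i 1) : ℝ) ^ 2
            ∂(D i)) ≤ ‖v‖ ^ 2)) ∧
    ∀ L : Finset (EuclideanSpace ℝ (Fin n)), L.card < n →
      ∃ i : Fin n, ∀ f ∈ L,
        (1 / 2) * α ^ (-(1 : ℝ) / 2) ≤
          ‖f - ((2 * α) ^ (-(1 : ℝ) / 2)) • EuclideanSpace.single i 1‖ := by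
  classical
  have hsA : (2 * α) ^ (-(1 : ℝ) / 2) = sA α := rfl
  constructor
  · refine ⟨XX n α, DD n α, YY n α, probXX hα0 hα, fun i => probDD hα0 hα i,
      fun i => probYY hα0 hα i, fun i => mixXX hα0 hα i, fun i => integrableDD hα0 hα i,
      fun i => ?_, fun i v => ?_⟩
    · rw [hsA]; exact meanDD hα0 hα i
    · rw [hsA]; exact covDD hα0 hα i v
  · intro L hL
    by_contra hcon
    push_neg at hcon
    choose g hgL hglt using hcon
    have hinj : Set.InjOn g (↑(univ : Finset (Fin n))) := by
      intro i _ j _ hgij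
      by_contra hij
      have h1 : ‖g i - sA α • EuclideanSpace.single i 1‖ < (1/2) * α ^ (-(1:ℝ)/2) := by
        have := hglt i; rwa [hsA] at this
      have h2 : ‖g j - sA α • EuclideanSpace.single j 1‖ < (1/2) * α ^ (-(1:ℝ)/2) := by
        have := hglt j; rwa [hsA] at this
      set μi : EuclideanSpace ℝ (Fin n) := sA α • EuclideanSpace.single i 1 with hμi
      set μj : EuclideanSpace ℝ (Fin n) := sA α • EuclideanSpace.single j 1 with hμj
      have e2 : ‖g i - μj‖ = ‖g j - μj‖ := by rw [hgij]
      have htri := dist_triangle μi (g i) μj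
      rw [dist_eq_norm, dist_eq_norm, dist_eq_norm, dist_means hα0 hij,
        norm_sub_rev μi (g i), e2] at htri
      linarith

    have hcard : (univ : Finset (Fin n)).card ≤ L.card :=
      Finset.card_le_card_of_injOn g (fun i _ => hgL i) hinj
    rw [Finset.card_univ, Fintype.card_fin] at hcard
    omega
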